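/- Let μ ∈ ℝ and σ² ≥ 1, and let D(μ,σ²) = Σ_{k ∈ ℤ} σ⁻¹ φ((k−μ)/σ), where φ(x) = (1/√(2π)) e^{−x²/2} is the standard normal density. Then |1 − D(μ,σ²)| ≤ 1/(√(2π)·σ). -/

import Mathlib

open Real MeasureTheory Set

namespace DiscNorm

noncomputable def f (μ σ : ℝ) (x : ℝ) : ℝ :=
  σ⁻¹ * ((Real.sqrt (2 * Real.pi))⁻¹ * Real.exp (-((x - μ) / σ) ^ 2 / 2))

lemma f_nonneg (μ σ : ℝ) (hσ : 0 < σ) (x : ℝ) : 0 ≤ f μ σ x := by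
  unfold f; positivity

lemma f_le (μ σ : ℝ) (hσ : 0 < σ) (x : ℝ) : f μ σ x ≤ 1 / (Real.sqrt (2 * Real.pi) * σ) := by
  unfold f
  have h1 : Real.exp (-((x - μ) / σ) ^ 2 / 2) ≤ 1 := by
    rw [Real.exp_le_one_iff]
    have := sq_nonneg ((x - μ) / σ)
    linarith
  have h2 : (0:ℝ) < Real.sqrt (2 * Real.pi) := Real.sqrt_pos.2 (by positivity)
  calc σ⁻¹ * ((Real.sqrt (2 * Real.pi))⁻¹ * Real.exp (-((x - μ) / σ) ^ 2 / 2))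
      ≤ σ⁻¹ * ((Real.sqrt (2 * Real.pi))⁻¹ * 1) := by
        apply mul_le_mul_of_nonneg_left _ (by positivity)
        exact mul_le_mul_of_nonneg_left h1 (by positivity)
    _ = 1 / (Real.sqrt (2 * Real.pi) * σ) := by field_simp

lemma f_mono (μ σ : ℝ) (hσ : 0 < σ) : MonotoneOn (f μ σ) (Iic μ) := by
  intro x hx y hy hxy
  simp only [mem_Iic] at hx hy
  unfold f
  have h2 : (0:ℝ) < Real.sqrt (2 * Real.pi) := Real.sqrt_pos.2 (by positivity)
  have h2 : (0:ℝ) < Real.sqrt (2 * Real.pi) := Real.sqrt_pos.2 (by positivity)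
  apply mul_le_mul_of_nonneg_left _ (by positivity)
  apply mul_le_mul_of_nonneg_left _ (by positivity)
  apply Real.exp_le_exp.2
  rw [div_le_div_iff_of_pos_right (by norm_num), neg_le_neg_iff, div_pow, div_pow]
  apply div_le_div_of_nonneg_right _ (by positivity)
  nlinarith

lemma f_anti (μ σ : ℝ) (hσ : 0 < σ) : AntitoneOn (f μ σ) (Ici μ) := by
  intro x hx y hy hxy
  simp only [mem_Ici] at hx hy
  unfold f
  have h2 : (0:ℝ) < Real.sqrt (2 * Real.pi) := Real.sqrt_pos.2 (by positivity)
  apply mul_le_mul_of_nonneg_left _ (by positivity)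
  apply mul_le_mul_of_nonneg_left _ (by positivity)
  apply Real.exp_le_exp.2
  rw [div_le_div_iff_of_pos_right (by norm_num), neg_le_neg_iff, div_pow, div_pow]
  apply div_le_div_of_nonneg_right _ (by positivity)
  nlinarith

lemma f_eq_gaussian (μ σ : ℝ) (hσ : 0 < σ) :
    f μ σ = ProbabilityTheory.gaussianPDFReal μ ⟨σ ^ 2, sq_nonneg σ⟩ := by
  funext x
  unfold f ProbabilityTheory.gaussianPDFReal
  change σ⁻¹ * ((Real.sqrt (2 * Real.pi))⁻¹ * Real.exp (-((x - μ) / σ) ^ 2 / 2)) = (Real.sqrt (2 * Real.pi * σ ^ 2))⁻¹ * Real.exp (-(x - μ) ^ 2 / (2 * σ ^ 2))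
  have h1 : Real.sqrt (2 * Real.pi * σ ^ 2) = Real.sqrt (2 * Real.pi) * σ := by
    rw [Real.sqrt_mul (by positivity), Real.sqrt_sq hσ.le]
  rw [h1]
  have h2 : -((x - μ) / σ) ^ 2 / 2 = -(x - μ) ^ 2 / (2 * σ ^ 2) := by
    rw [div_pow]
    have : σ ^ 2 ≠ 0 := by positivity
    field_simp
  rw [h2, mul_inv]
  ring

lemma f_integrable (μ σ : ℝ) (hσ : 0 < σ) : Integrable (f μ σ) := by
  rw [f_eq_gaussian μ σ hσ]
  exact ProbabilityTheory.integrable_gaussianPDFReal μ _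

lemma f_integral (μ σ : ℝ) (hσ : 0 < σ) : ∫ x, f μ σ x = 1 := by
  rw [f_eq_gaussian μ σ hσ]
  exact ProbabilityTheory.integral_gaussianPDFReal_eq_one μ
    (fun h => by have := congrArg Subtype.val h; exact pow_ne_zero 2 hσ.ne' this)

lemma int_le (μ σ : ℝ) (hσ : 0 < σ) (a B : ℝ) (h : ∀ x ∈ Ioc a (a + 1), f μ σ x ≤ B) :
    ∫ x in Ioc a (a + 1), f μ σ x ≤ B := by
  have hvol : (volume (Ioc a (a + 1))).toReal = 1 := by
    rw [Real.volume_Ioc]; norm_num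
  have := setIntegral_mono_on ((f_integrable μ σ hσ).integrableOn)
    (integrableOn_const (C := B) measure_Ioc_lt_top.ne) measurableSet_Ioc h
  rwa [setIntegral_const, measureReal_def, hvol, one_smul] at this

lemma le_int (μ σ : ℝ) (hσ : 0 < σ) (a B : ℝ) (h : ∀ x ∈ Ioc a (a + 1), B ≤ f μ σ x) :
    B ≤ ∫ x in Ioc a (a + 1), f μ σ x := by
  have hvol : (volume (Ioc a (a + 1))).toReal = 1 := by
    rw [Real.volume_Ioc]; norm_num
  have := setIntegral_mono_on (integrableOn_const (C := B) measure_Ioc_lt_top.ne)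
    ((f_integrable μ σ hσ).integrableOn) measurableSet_Ioc h
  rwa [setIntegral_const, measureReal_def, hvol, one_smul] at this

lemma hasSum_g (μ σ : ℝ) (hσ : 0 < σ) :
    HasSum (fun k : ℤ => ∫ x in Ioc (k : ℝ) ((k : ℝ) + 1), f μ σ x) 1 := by
  have hU : ⋃ k : ℤ, Ioc (k : ℝ) ((k : ℝ) + 1) = univ := by
    ext x
    simp only [mem_iUnion, mem_Ioc, mem_univ, iff_true]
    refine ⟨⌈x⌉ - 1, ?_, ?_⟩
    · push_cast; linarith [Int.ceil_lt_add_one x]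
    · push_cast; linarith [Int.le_ceil x]
  have hd : Pairwise (Function.onFun Disjoint fun k : ℤ => Ioc (k : ℝ) ((k : ℝ) + 1)) := by
    intro i j hij
    rw [Function.onFun, Set.Ioc_disjoint_Ioc]
    rcases hij.lt_or_gt with h | h
    · have h' : (i:ℝ) + 1 ≤ j := by exact_mod_cast h
      exact min_le_of_left_le (le_max_of_le_right h')
    · have h' : (j:ℝ) + 1 ≤ i := by exact_mod_cast h
      exact min_le_of_right_le (le_max_of_le_left h')
  have := hasSum_integral_iUnion (μ := volume) (f := f μ σ)
    (fun k : ℤ => measurableSet_Ioc) hd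
    (by rw [hU]; exact (f_integrable μ σ hσ).integrableOn)
  rw [hU] at this
  simpa [Measure.restrict_univ, f_integral μ σ hσ] using this

noncomputable def G (μ σ : ℝ) (a : ℝ) : ℝ := ∫ x in Ioc a (a + 1), f μ σ x

lemma G_le_f_of_le (μ σ : ℝ) (hσ : 0 < σ) (a : ℝ) (ha : μ ≤ a) : G μ σ a ≤ f μ σ a := by
  apply int_le μ σ hσ
  intro x hx
  exact f_anti μ σ hσ ha (le_trans ha hx.1.le) hx.1.le

lemma f_le_G_of_le (μ σ : ℝ) (hσ : 0 < σ) (a : ℝ) (ha : μ ≤ a) : f μ σ (a + 1) ≤ G μ σ a := by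
  apply le_int μ σ hσ
  intro x hx
  exact f_anti μ σ hσ (le_trans ha hx.1.le) (by simp only [mem_Ici]; linarith) hx.2

lemma G_le_f_of_ge (μ σ : ℝ) (hσ : 0 < σ) (a : ℝ) (ha : a + 1 ≤ μ) : G μ σ a ≤ f μ σ (a + 1) := by
  apply int_le μ σ hσ
  intro x hx
  exact f_mono μ σ hσ (le_trans hx.2 ha) ha hx.2

lemma f_le_G_of_ge (μ σ : ℝ) (hσ : 0 < σ) (a : ℝ) (ha : a + 1 ≤ μ) : f μ σ a ≤ G μ σ a := by
  apply le_int μ σ hσ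
  intro x hx
  exact f_mono μ σ hσ (by simp only [mem_Iic]; linarith) (le_trans hx.2 ha) hx.1.le

lemma G_le_c (μ σ : ℝ) (hσ : 0 < σ) (a : ℝ) : G μ σ a ≤ 1 / (Real.sqrt (2 * Real.pi) * σ) :=
  int_le μ σ hσ a _ (fun x _ => f_le μ σ hσ x)

lemma min_le_G_zero (μ σ : ℝ) (hσ : 0 < σ) (h0 : 0 ≤ μ) (h1 : μ ≤ 1) :
    min (f μ σ 0) (f μ σ 1) ≤ G μ σ 0 := by
  apply le_int μ σ hσ
  intro x hx
  rcases le_total x μ with h | h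
  · exact le_trans (min_le_left _ _) (f_mono μ σ hσ h0 h hx.1.le)
  · refine le_trans (min_le_right _ _) (f_anti μ σ hσ h h1 ?_)
    linarith [hx.2]

lemma hasSum_G (μ σ : ℝ) (hσ : 0 < σ) : HasSum (fun k : ℤ => G μ σ (k : ℝ)) 1 :=
  hasSum_g μ σ hσ

lemma aux_main (μ σ : ℝ) (hσ : 0 < σ) (h0 : 0 ≤ μ) (h1 : μ ≤ 1) :
    |1 - ∑' k : ℤ, f μ σ (k : ℝ)| ≤ 1 / (Real.sqrt (2 * Real.pi) * σ) := by
  have pi2 : (0:ℝ) < Real.sqrt (2 * Real.pi) := Real.sqrt_pos.2 (by positivity)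
  set c := 1 / (Real.sqrt (2 * Real.pi) * σ) with hcdef
  have hc0 : (0:ℝ) ≤ c := by positivity
  -- ℕ-indexed sequences
  set FN : ℕ → ℝ := fun n => f μ σ (n : ℝ) with hFNdef
  set FNeg : ℕ → ℝ := fun n => f μ σ (-((n : ℝ) + 1)) with hFNegdef
  set FN2 : ℕ → ℝ := fun n => f μ σ (-(n : ℝ)) with hFN2def
  set GN : ℕ → ℝ := fun n => G μ σ (n : ℝ) with hGNdef
  set GNeg : ℕ → ℝ := fun n => G μ σ (-((n : ℝ) + 1)) with hGNegdef
  have hg1 : HasSum (fun k : ℤ => G μ σ (k : ℝ)) 1 := hasSum_G μ σ hσ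
  have hgS : Summable (fun k : ℤ => G μ σ (k : ℝ)) := hg1.summable
  -- equalities of component functions
  have eGN : (fun n : ℕ => G μ σ (((n : ℕ) : ℤ) : ℝ)) = GN := by
    funext n; simp [hGNdef]
  have eGNeg : (fun n : ℕ => G μ σ ((-((n : ℕ) + 1) : ℤ) : ℝ)) = GNeg := by
    funext n; rw [hGNegdef]; push_cast; ring_nf
  have eFN : (fun n : ℕ => f μ σ (((n : ℕ) : ℤ) : ℝ)) = FN := by
    funext n; simp [hFNdef]
  have eFNeg : (fun n : ℕ => f μ σ ((-((n : ℕ) + 1) : ℤ) : ℝ)) = FNeg := by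
    funext n; rw [hFNegdef]; push_cast; ring_nf
  -- summability of the G components
  have hGNS : Summable GN := by
    rw [← eGN]
    exact hgS.comp_injective Nat.cast_injective
  have hGNegS : Summable GNeg := by
    rw [← eGNeg]
    exact hgS.comp_injective (fun a b h => by omega)
  have hGN1S : Summable (fun n : ℕ => GN (n + 1)) := (summable_nat_add_iff 1).2 hGNS
  -- pointwise bounds
  have hnn : ∀ n : ℕ, (0:ℝ) ≤ (n:ℝ) := fun n => Nat.cast_nonneg n
  have b1 : ∀ n : ℕ, FN (n + 2) ≤ GN (n + 1) := by
    intro n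
    have h := f_le_G_of_le μ σ hσ ((n : ℝ) + 1) (by linarith [hnn n])
    show f μ σ (((n + 2 : ℕ)) : ℝ) ≤ G μ σ (((n + 1 : ℕ)) : ℝ)
    push_cast
    convert h using 2
    ring
  have b2 : ∀ n : ℕ, FNeg n ≤ GNeg n := by
    intro n
    exact f_le_G_of_ge μ σ hσ (-((n : ℝ) + 1)) (by linarith [hnn n])
  have b3 : ∀ n : ℕ, GN (n + 1) ≤ FN (n + 1) := by
    intro n
    have h := G_le_f_of_le μ σ hσ ((n : ℝ) + 1) (by linarith [hnn n])
    show G μ σ (((n + 1 : ℕ)) : ℝ) ≤ f μ σ (((n + 1 : ℕ)) : ℝ)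
    push_cast
    exact h
  have b4 : ∀ n : ℕ, GNeg n ≤ FN2 n := by
    intro n
    have h := G_le_f_of_ge μ σ hσ (-((n : ℝ) + 1)) (by linarith [hnn n])
    show G μ σ (-((n : ℝ) + 1)) ≤ f μ σ (-(n : ℝ))
    convert h using 2
    ring
  -- summability of F components
  have hFN2S' : Summable (fun n : ℕ => FN (n + 2)) :=
    Summable.of_nonneg_of_le (fun n => f_nonneg μ σ hσ _) b1 hGN1S
  have hFNS : Summable FN := (summable_nat_add_iff 2).1 hFN2S'
  have hFN1S : Summable (fun n : ℕ => FN (n + 1)) := (summable_nat_add_iff 1).2 hFNS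
  have hFNegS : Summable FNeg :=
    Summable.of_nonneg_of_le (fun n => f_nonneg μ σ hσ _) b2 hGNegS
  have hFN2S : Summable FN2 := by
    apply (summable_nat_add_iff 1).1
    have e : (fun n : ℕ => FN2 (n + 1)) = FNeg := by
      funext n; rw [hFN2def, hFNegdef]; push_cast; ring_nf
    rw [e]; exact hFNegS
  -- split the ℤ-sums
  have hFsplit : ∑' k : ℤ, f μ σ (k : ℝ) = (∑' n : ℕ, FN n) + ∑' n : ℕ, FNeg n := by
    rw [tsum_of_nat_of_neg_add_one (by rw [eFN]; exact hFNS) (by rw [eFNeg]; exact hFNegS),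
      eFN, eFNeg]
  have hGsplit : (∑' n : ℕ, GN n) + ∑' n : ℕ, GNeg n = 1 := by
    have h := tsum_of_nat_of_neg_add_one (f := fun k : ℤ => G μ σ (k : ℝ))
      (by rw [eGN]; exact hGNS) (by rw [eGNeg]; exact hGNegS)
    rw [hg1.tsum_eq, eGN, eGNeg] at h
    exact h.symm
  -- peel off initial terms
  have hFN0 : ∑' n : ℕ, FN n = FN 0 + ∑' n : ℕ, FN (n + 1) := Summable.tsum_eq_zero_add hFNS
  have hFN1 : ∑' n : ℕ, FN (n + 1) = FN 1 + ∑' n : ℕ, FN (n + 2) := by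
    rw [Summable.tsum_eq_zero_add hFN1S]
  have hGN0 : ∑' n : ℕ, GN n = GN 0 + ∑' n : ℕ, GN (n + 1) := Summable.tsum_eq_zero_add hGNS
  have hFN20 : ∑' n : ℕ, FN2 n = FN2 0 + ∑' n : ℕ, FN2 (n + 1) := Summable.tsum_eq_zero_add hFN2S
  have eF20 : FN2 0 = FN 0 := by rw [hFN2def, hFNdef]; norm_num
  have eF2succ : (fun n : ℕ => FN2 (n + 1)) = FNeg := by
    funext n; rw [hFN2def, hFNegdef]; push_cast; ring_nf
  -- tsum inequalities
  have t1 : ∑' n : ℕ, FN (n + 2) ≤ ∑' n : ℕ, GN (n + 1) := Summable.tsum_le_tsum b1 hFN2S' hGN1S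
  have t2 : ∑' n : ℕ, FNeg n ≤ ∑' n : ℕ, GNeg n := Summable.tsum_le_tsum b2 hFNegS hGNegS
  have t3 : ∑' n : ℕ, GN (n + 1) ≤ ∑' n : ℕ, FN (n + 1) := Summable.tsum_le_tsum b3 hGN1S hFN1S
  have t4 : ∑' n : ℕ, GNeg n ≤ ∑' n : ℕ, FN2 n := Summable.tsum_le_tsum b4 hGNegS hFN2S
  -- head-term bounds
  have hmin : min (FN 0) (FN 1) ≤ GN 0 := by
    have := min_le_G_zero μ σ hσ h0 h1
    simpa [hFNdef, hGNdef] using this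
  have hmax : max (FN 0) (FN 1) ≤ c := max_le (f_le μ σ hσ _) (f_le μ σ hσ _)
  have hsum01 : FN 0 + FN 1 ≤ c + GN 0 := by
    have := max_add_min (FN 0) (FN 1)
    have h' := add_le_add hmax hmin
    linarith
  have hGN0c : GN 0 ≤ c := G_le_c μ σ hσ _
  -- conclude
  rw [eF2succ, eF20] at hFN20
  rw [hFsplit, abs_le]
  constructor
  · -- -c ≤ 1 - S, i.e. S ≤ 1 + c
    linarith [hGsplit, hGN0, t1, t2, hFN0, hFN1, hsum01]
  · -- 1 - S ≤ c, i.e. 1 - c ≤ S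
    linarith [hGsplit, hGN0, t3, t4, hFN0, hFN20, hGN0c]

end DiscNorm

/-- The normalizing constant D(μ,σ²) = Σ_{k∈ℤ} σ⁻¹ φ((k-μ)/σ) of the discretized
normal distribution satisfies |1 - D(μ,σ²)| ≤ 1/(√(2π)σ) when σ² ≥ 1. -/
theorem discretized_normal_constant (μ σ : ℝ) (hσ : 0 < σ) (hσ2 : 1 ≤ σ ^ 2) :
    |1 - ∑' k : ℤ, σ⁻¹ * ((Real.sqrt (2 * Real.pi))⁻¹ * Real.exp (-(((k : ℝ) - μ) / σ) ^ 2 / 2))|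
      ≤ 1 / (Real.sqrt (2 * Real.pi) * σ) := by
  have key := DiscNorm.aux_main (μ - ⌊μ⌋) σ hσ (by linarith [Int.floor_le μ])
    (by linarith [Int.lt_floor_add_one μ])
  have h := Equiv.tsum_eq (Equiv.addRight (⌊μ⌋ : ℤ))
    (fun k : ℤ => σ⁻¹ * ((Real.sqrt (2 * Real.pi))⁻¹ * Real.exp (-(((k : ℝ) - μ) / σ) ^ 2 / 2)))
  have e2 : ∀ k : ℤ, σ⁻¹ * ((Real.sqrt (2 * Real.pi))⁻¹ *
      Real.exp (-((((k + ⌊μ⌋ : ℤ) : ℝ) - μ) / σ) ^ 2 / 2)) = DiscNorm.f (μ - ⌊μ⌋) σ (k : ℝ) := by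
    intro k
    unfold DiscNorm.f
    congr 3
    push_cast
    ring
  have h2 : ∑' k : ℤ, σ⁻¹ * ((Real.sqrt (2 * Real.pi))⁻¹ *
      Real.exp (-(((k : ℝ) - μ) / σ) ^ 2 / 2)) = ∑' k : ℤ, DiscNorm.f (μ - ⌊μ⌋) σ (k : ℝ) := by
    rw [← h]
    exact tsum_congr e2
  rw [h2]
  exact key
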